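/- Let X be an n×n real matrix, 1 ≤ k ≤ n−1, and a a real number. (1) Let X' = X·e_k(a). For subsets I, J of {1,…,n} with |I| = |J|: if J contains k+1 but not k, then |X'_{I,J}| = |X_{I,J}| + a·|X_{I,(J∖{k+1})∪{k}}|; for all other pairs I, J one has |X'_{I,J}| = |X_{I,J}|. (2) Let X'' = e_k(a)·X. If I contains k but not k+1, then |X''_{I,J}| = |X_{I,J}| + a·|X_{(I∖{k})∪{k+1},J}|; for all other pairs I, J one has |X''_{I,J}| = |X_{I,J}|. -/

import Mathlib

open Matrix

/-- The Chevalley generator `e_i(a)` (0-based index `i`): the identity matrix with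
entry `a` in position `(i, i+1)`.  `f_i(a)` is its transpose. -/
def chevE (n : ℕ) (i : ℕ) (a : ℝ) : Matrix (Fin n) (Fin n) ℝ :=
  fun p q => if (p : ℕ) = (q : ℕ) then 1
    else if (p : ℕ) = i ∧ (q : ℕ) = i + 1 then a
    else 0

lemma mulE_apply {n : ℕ} (X : Matrix (Fin n) (Fin n) ℝ) {k : ℕ} (hk : k + 1 < n) (a : ℝ)
    (p q : Fin n) :
    (X * chevE n k a) p q =
      X p q + (if (q : ℕ) = k + 1 then a * X p ⟨k, Nat.lt_of_succ_lt hk⟩ else 0) := by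
  rw [Matrix.mul_apply]
  by_cases hq : (q : ℕ) = k + 1
  · have hpt : ∀ r : Fin n, X p r * chevE n k a r q =
        (if r = q then X p q else 0) +
          (if r = (⟨k, Nat.lt_of_succ_lt hk⟩ : Fin n) then a * X p ⟨k, Nat.lt_of_succ_lt hk⟩ else 0) := by
      intro r
      by_cases h1 : r = q
      · subst h1
        have h2 : r ≠ (⟨k, Nat.lt_of_succ_lt hk⟩ : Fin n) := by
          intro hc; rw [hc] at hq; simp at hq
        simp [chevE, hq, h2]
      · by_cases h2 : r = (⟨k, Nat.lt_of_succ_lt hk⟩ : Fin n)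
        · subst h2
          have hv : (k : ℕ) ≠ (q : ℕ) := by omega
          simp [chevE, hv, hq, h1]
          ring
        · have hv : (r : ℕ) ≠ (q : ℕ) := fun h => h1 (Fin.ext h)
          have hv2 : (r : ℕ) ≠ k := by
            intro h; exact h2 (Fin.ext h)
          simp [chevE, hv, hv2, h1, h2]
    rw [Finset.sum_congr rfl (fun r _ => hpt r), Finset.sum_add_distrib,
      Finset.sum_ite_eq', Finset.sum_ite_eq']
    simp [hq]
  · have hpt : ∀ r : Fin n, X p r * chevE n k a r q = if r = q then X p q else 0 := by
      intro r
      by_cases h1 : r = q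
      · subst h1
        simp [chevE]
      · have hv : (r : ℕ) ≠ (q : ℕ) := fun h => h1 (Fin.ext h)
        simp [chevE, hv, h1, hq]
    rw [Finset.sum_congr rfl (fun r _ => hpt r), Finset.sum_ite_eq']
    simp [hq]

lemma E_mul_apply {n : ℕ} (X : Matrix (Fin n) (Fin n) ℝ) {k : ℕ} (hk : k + 1 < n) (a : ℝ)
    (p q : Fin n) :
    (chevE n k a * X) p q =
      X p q + (if (p : ℕ) = k then a * X ⟨k + 1, hk⟩ q else 0) := by
  rw [Matrix.mul_apply]
  by_cases hp : (p : ℕ) = k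
  · have hpt : ∀ r : Fin n, chevE n k a p r * X r q =
        (if r = p then X p q else 0) +
          (if r = (⟨k + 1, hk⟩ : Fin n) then a * X ⟨k + 1, hk⟩ q else 0) := by
      intro r
      by_cases h1 : r = p
      · subst h1
        have h2 : r ≠ (⟨k + 1, hk⟩ : Fin n) := by
          intro hc; rw [hc] at hp; simp at hp
        simp [chevE, hp, h2]
      · by_cases h2 : r = (⟨k + 1, hk⟩ : Fin n)
        · subst h2
          have hv : (p : ℕ) ≠ (k + 1 : ℕ) := by omega
          simp [chevE, hv, hp, h1]
        · have hv : (p : ℕ) ≠ (r : ℕ) := fun h => h1 (Fin.ext h.symm)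
          have hv2 : (r : ℕ) ≠ k + 1 := by
            intro h; exact h2 (Fin.ext h)
          simp [chevE, hv, hv2, h1, h2, hp]
          intro hc; exact absurd (hp.trans hc) hv
    rw [Finset.sum_congr rfl (fun r _ => hpt r), Finset.sum_add_distrib,
      Finset.sum_ite_eq', Finset.sum_ite_eq']
    simp [hp]
  · have hpt : ∀ r : Fin n, chevE n k a p r * X r q = if r = p then X p q else 0 := by
      intro r
      by_cases h1 : r = p
      · subst h1
        simp [chevE]
      · have hv : (p : ℕ) ≠ (r : ℕ) := fun h => h1 (Fin.ext h.symm)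
        simp [chevE, hv, h1, hp]
    rw [Finset.sum_congr rfl (fun r _ => hpt r), Finset.sum_ite_eq']
    simp [hp]

/-- Effect of multiplication by a Chevalley generator on minors:
minors of `X * e_k(a)` (resp. `e_k(a) * X`) agree with those of `X` except when the
column set contains `k+1` but not `k` (resp. the row set contains `k` but not `k+1`),
in which case the stated correction term appears. -/
theorem chevalley_minors {n : ℕ} (X : Matrix (Fin n) (Fin n) ℝ) (k : ℕ)
    (hk : k + 1 < n) (a : ℝ) :
    (∀ m : ℕ, ∀ I J : Fin m → Fin n, StrictMono I → StrictMono J →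
      (((∃ j, (J j : ℕ) = k + 1) ∧ ∀ j, (J j : ℕ) ≠ k) →
        ((X * chevE n k a).submatrix I J).det =
          (X.submatrix I J).det +
            a * (X.submatrix I
              (fun j => if (J j : ℕ) = k + 1 then (⟨k, by omega⟩ : Fin n) else J j)).det) ∧
      (¬ ((∃ j, (J j : ℕ) = k + 1) ∧ ∀ j, (J j : ℕ) ≠ k) →
        ((X * chevE n k a).submatrix I J).det = (X.submatrix I J).det)) ∧
    (∀ m : ℕ, ∀ I J : Fin m → Fin n, StrictMono I → StrictMono J →
      (((∃ i, (I i : ℕ) = k) ∧ ∀ i, (I i : ℕ) ≠ k + 1) →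
        ((chevE n k a * X).submatrix I J).det =
          (X.submatrix I J).det +
            a * (X.submatrix
              (fun i => if (I i : ℕ) = k then (⟨k + 1, hk⟩ : Fin n) else I i) J).det) ∧
      (¬ ((∃ i, (I i : ℕ) = k) ∧ ∀ i, (I i : ℕ) ≠ k + 1) →
        ((chevE n k a * X).submatrix I J).det = (X.submatrix I J).det)) := by
  have hkn : k < n := by omega
  constructor
  · -- column case
    intro m I J hI hJ
    have hJv : ∀ j j' : Fin m, (J j : ℕ) = (J j' : ℕ) → j = j' :=
      fun j j' h => hJ.injective (Fin.ext h)
    have main : ∀ j₀ : Fin m, (J j₀ : ℕ) = k + 1 →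
        ((X * chevE n k a).submatrix I J).det =
          (X.submatrix I J).det +
            a * ((X.submatrix I J).updateCol j₀ (fun i => X (I i) ⟨k, hkn⟩)).det := by
      intro j₀ hj₀
      have key : (X * chevE n k a).submatrix I J =
          (X.submatrix I J).updateCol j₀
            ((fun i => X (I i) (J j₀)) + a • fun i => X (I i) ⟨k, hkn⟩) := by
        ext i j
        by_cases h : j = j₀
        · subst h
          simp [Matrix.updateCol_apply, mulE_apply X hk, hj₀, smul_eq_mul]
        · have hne : (J j : ℕ) ≠ k + 1 := by
            intro hc; exact h (hJv _ _ (hc.trans hj₀.symm))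
          simp [Matrix.updateCol_apply, h, mulE_apply X hk, hne]
      rw [key, Matrix.det_updateCol_add, Matrix.det_updateCol_smul]
      congr 1
      have heq : (fun i => X (I i) (J j₀)) = fun i => (X.submatrix I J) i j₀ := rfl
      rw [heq, Matrix.updateCol_eq_self]
    constructor
    · rintro ⟨⟨j₀, hj₀⟩, hnok⟩
      have heq2 : (X.submatrix I J).updateCol j₀ (fun i => X (I i) ⟨k, hkn⟩) =
          X.submatrix I
            (fun j => if (J j : ℕ) = k + 1 then (⟨k, hkn⟩ : Fin n) else J j) := by
        ext i j
        by_cases h : j = j₀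
        · subst h
          simp [Matrix.updateCol_apply, hj₀]
        · have hne : (J j : ℕ) ≠ k + 1 := by
            intro hc; exact h (hJv _ _ (hc.trans hj₀.symm))
          simp [Matrix.updateCol_apply, h, hne]
      rw [main j₀ hj₀, heq2]
    · intro h
      by_cases hex : ∃ j, (J j : ℕ) = k + 1
      · obtain ⟨j₀, hj₀⟩ := hex
        have hB : ¬∀ j, (J j : ℕ) ≠ k := fun hb => h ⟨⟨j₀, hj₀⟩, hb⟩
        push_neg at hB
        obtain ⟨j₁, hj₁⟩ := hB
        rw [main j₀ hj₀]
        have hne : j₁ ≠ j₀ := by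
          intro hc; rw [hc, hj₀] at hj₁; omega
        have hz : ((X.submatrix I J).updateCol j₀ (fun i => X (I i) ⟨k, hkn⟩)).det = 0 := by
          apply Matrix.det_zero_of_column_eq hne
          intro i
          have hJ1 : J j₁ = (⟨k, hkn⟩ : Fin n) := Fin.ext hj₁
          simp [Matrix.updateCol_apply, hne, hJ1]
        rw [hz]; ring
      · push_neg at hex
        have : (X * chevE n k a).submatrix I J = X.submatrix I J := by
          ext i j
          simp [mulE_apply X hk, hex j]
        rw [this]
  · -- row case
    intro m I J hI hJ
    have hIv : ∀ i i' : Fin m, (I i : ℕ) = (I i' : ℕ) → i = i' :=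
      fun i i' h => hI.injective (Fin.ext h)
    have main : ∀ i₀ : Fin m, (I i₀ : ℕ) = k →
        ((chevE n k a * X).submatrix I J).det =
          (X.submatrix I J).det +
            a * ((X.submatrix I J).updateRow i₀ (fun j => X ⟨k + 1, hk⟩ (J j))).det := by
      intro i₀ hi₀
      have key : (chevE n k a * X).submatrix I J =
          (X.submatrix I J).updateRow i₀
            ((fun j => X (I i₀) (J j)) + a • fun j => X ⟨k + 1, hk⟩ (J j)) := by
        ext i j
        by_cases h : i = i₀
        · subst h
          simp [Matrix.updateRow_apply, E_mul_apply X hk, hi₀, smul_eq_mul]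
        · have hne : (I i : ℕ) ≠ k := by
            intro hc; exact h (hIv _ _ (hc.trans hi₀.symm))
          simp [Matrix.updateRow_apply, h, E_mul_apply X hk, hne]
      rw [key, Matrix.det_updateRow_add, Matrix.det_updateRow_smul]
      congr 1
      have heq : (fun j => X (I i₀) (J j)) = (X.submatrix I J) i₀ := rfl
      rw [heq, Matrix.updateRow_eq_self]
    constructor
    · rintro ⟨⟨i₀, hi₀⟩, hnok⟩
      have heq2 : (X.submatrix I J).updateRow i₀ (fun j => X ⟨k + 1, hk⟩ (J j)) =
          X.submatrix
            (fun i => if (I i : ℕ) = k then (⟨k + 1, hk⟩ : Fin n) else I i) J := by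
        ext i j
        by_cases h : i = i₀
        · subst h
          simp [Matrix.updateRow_apply, hi₀]
        · have hne : (I i : ℕ) ≠ k := by
            intro hc; exact h (hIv _ _ (hc.trans hi₀.symm))
          simp [Matrix.updateRow_apply, h, hne]
      rw [main i₀ hi₀, heq2]
    · intro h
      by_cases hex : ∃ i, (I i : ℕ) = k
      · obtain ⟨i₀, hi₀⟩ := hex
        have hB : ¬∀ i, (I i : ℕ) ≠ k + 1 := fun hb => h ⟨⟨i₀, hi₀⟩, hb⟩
        push_neg at hB
        obtain ⟨i₁, hi₁⟩ := hB
        rw [main i₀ hi₀]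
        have hne : i₁ ≠ i₀ := by
          intro hc; rw [hc, hi₀] at hi₁; omega
        have hz : ((X.submatrix I J).updateRow i₀ (fun j => X ⟨k + 1, hk⟩ (J j))).det = 0 := by
          apply Matrix.det_zero_of_row_eq hne
          have hI1 : I i₁ = (⟨k + 1, hk⟩ : Fin n) := Fin.ext hi₁
          funext j
          simp [Matrix.updateRow_apply, hne, hI1]
        rw [hz]; ring
      · push_neg at hex
        have : (chevE n k a * X).submatrix I J = X.submatrix I J := by
          ext i j
          simp [E_mul_apply X hk, hex i]
        rw [this]
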